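/- Let T : X → X be a continuous map of a compact metric space. For every ε > 0 there exists δ > 0 such that for every δ-pseudotrajectory {x_k}_{k≥0}, the set {k ∈ ℕ : x_k ∈ U_ε(closure(M(X,T)))} is syndetic in ℕ. -/
import Mathlib


open Metric Filter Set Topology
open scoped Classical

variable {X : Type*}

/-- A set of naturals is syndetic: bounded gaps. -/
def Syndetic (S : Set ℕ) : Prop := ∃ n : ℕ, ∀ m : ℕ, ∃ k ∈ S, m ≤ k ∧ k ≤ m + n

/-- Forward orbit of a point. -/
def fwdOrbit (T : X → X) (y : X) : Set X := Set.range fun k : ℕ => T^[k] y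

/-- A point is minimal (almost periodic): its forward orbit closure is a minimal set. -/
def IsMinimalPt [TopologicalSpace X] (T : X → X) (y : X) : Prop :=
  ∀ z ∈ closure (fwdOrbit T y), closure (fwdOrbit T z) = closure (fwdOrbit T y)

/-- ℤ-iteration of a homeomorphism. -/
noncomputable def zIter [TopologicalSpace X] (T : X ≃ₜ X) (n : ℤ) : X → X :=
  if 0 ≤ n then (⇑T)^[n.toNat] else (⇑T.symm)^[(-n).toNat]

/-- `A` is an `ε`-network: every point of the space is within `ε` of `A`. -/
def IsNet [PseudoMetricSpace X] (ε : ℝ) (A : Set X) : Prop :=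
  ∀ x : X, ∃ a ∈ A, dist x a ≤ ε

/-- A point is nonwandering (w.r.t. forward iterates). -/
def NonWandering [TopologicalSpace X] (T : X → X) (x : X) : Prop :=
  ∀ U : Set X, IsOpen U → x ∈ U → ∃ k : ℕ, 1 ≤ k ∧ ((fun p => T^[k] p) '' U ∩ U).Nonempty

/-- One-sided `d`-pseudotrajectory. -/
def IsPseudoTraj [PseudoMetricSpace X] (T : X → X) (d : ℝ) (x : ℕ → X) : Prop :=
  ∀ k : ℕ, dist (x (k + 1)) (T (x k)) ≤ d

/-- Two-sided `d`-pseudotrajectory. -/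
def IsPseudoTrajZ [PseudoMetricSpace X] (T : X → X) (d : ℝ) (x : ℤ → X) : Prop :=
  ∀ k : ℤ, dist (x (k + 1)) (T (x k)) ≤ d

/-- A chain recurrent point. -/
def ChainRec [PseudoMetricSpace X] (T : X → X) (x : X) : Prop :=
  ∀ d > (0 : ℝ), ∃ n : ℕ, 1 ≤ n ∧ ∃ c : ℕ → X, c 0 = x ∧ c n = x ∧
    ∀ k < n, dist (c (k + 1)) (T (c k)) ≤ d

/-- ω-limit set of a point under a map. -/
def omegaSet [TopologicalSpace X] (T : X → X) (y : X) : Set X :=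
  {p | ∃ φ : ℕ → ℕ, StrictMono φ ∧ Tendsto (fun n => T^[φ n] y) atTop (nhds p)}

/-- The set of recurrent points (`x ∈ ω(x)`). -/
def RecurrentPts [TopologicalSpace X] (T : X → X) : Set X := {x | x ∈ omegaSet T x}

/-- The multishadowing property (for homeomorphisms, two-sided). -/
def Multishadowing [PseudoMetricSpace X] (T : X ≃ₜ X) : Prop :=
  ∀ ε > (0 : ℝ), ∃ d > (0 : ℝ), ∀ x : ℤ → X, IsPseudoTrajZ (⇑T) d x →
    ∃ Y : Finset X, ∀ k : ℤ, ∃ y ∈ Y, dist (x k) (zIter T k y) < ε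

/-- Topological support of a measure: points all of whose open neighborhoods
have positive measure. -/
def msupp [TopologicalSpace X] [MeasurableSpace X] (μ : MeasureTheory.Measure X) : Set X :=
  {x | ∀ U : Set X, IsOpen U → x ∈ U → 0 < μ U}

/-- Counting function for density computations. -/
noncomputable def cnt (K : Set ℕ) (N : ℕ) : ℝ :=
  ((Finset.range (N + 1)).filter (· ∈ K)).card


lemma fwdOrbit_mapsTo' (T : X → X) (y : X) : Set.MapsTo T (fwdOrbit T y) (fwdOrbit T y) := by
  rintro _ ⟨k, rfl⟩
  exact ⟨k + 1, show T^[k + 1] y = T (T^[k] y) from Function.iterate_succ_apply' T k y⟩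

lemma closure_fwdOrbit_mapsTo' [TopologicalSpace X] {T : X → X} (hT : Continuous T) (y : X) :
    Set.MapsTo T (closure (fwdOrbit T y)) (closure (fwdOrbit T y)) := by
  intro z hz
  have h1 : T z ∈ closure (T '' fwdOrbit T y) :=
    image_closure_subset_closure_image hT ⟨z, hz, rfl⟩
  exact closure_mono (fwdOrbit_mapsTo' T y).image_subset h1

lemma exists_minimalPt' [MetricSpace X] [CompactSpace X] {T : X → X} (hT : Continuous T)
    {K : Set X} (hne : K.Nonempty) (hcl : IsClosed K) (hinv : Set.MapsTo T K K) :
    ∃ y ∈ K, IsMinimalPt T y := by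
  set S : Set (Set X) := {A | A.Nonempty ∧ IsClosed A ∧ Set.MapsTo T A A ∧ A ⊆ K} with hS
  have hzorn : ∀ c ⊆ S, IsChain (· ⊆ ·) c → c.Nonempty →
      ∃ lb ∈ S, ∀ s ∈ c, lb ⊆ s := by
    intro c hcS hchain hcne
    haveI : Nonempty c := hcne.to_subtype
    have hdir : DirectedOn (· ⊇ ·) c := by
      intro a ha b hb
      rcases hchain.total ha hb with hab | hba
      · exact ⟨a, ha, subset_rfl, hab⟩
      · exact ⟨b, hb, hba, subset_rfl⟩
    have hnint : (⋂₀ c).Nonempty :=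
      IsCompact.nonempty_sInter_of_directed_nonempty_isCompact_isClosed hdir
        (fun U hU => (hcS hU).1) (fun U hU => (hcS hU).2.1.isCompact)
        (fun U hU => (hcS hU).2.1)
    refine ⟨⋂₀ c, ⟨hnint, isClosed_sInter fun U hU => (hcS hU).2.1, ?_, ?_⟩,
      fun s hs => Set.sInter_subset_of_mem hs⟩
    · intro x hx
      exact Set.mem_sInter.2 fun A hA => (hcS hA).2.2.1 (Set.mem_sInter.1 hx A hA)
    · obtain ⟨A, hA⟩ := hcne
      exact (Set.sInter_subset_of_mem hA).trans (hcS hA).2.2.2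
  obtain ⟨K₀, hK₀K, hK₀S, hK₀min⟩ := zorn_superset_nonempty S hzorn K ⟨hne, hcl, hinv, subset_rfl⟩
  obtain ⟨hK₀ne, hK₀cl, hK₀inv, hK₀sub⟩ := hK₀S
  have key : ∀ y ∈ K₀, closure (fwdOrbit T y) = K₀ := by
    intro y hy
    have horb : fwdOrbit T y ⊆ K₀ := by
      rintro _ ⟨k, rfl⟩
      exact hK₀inv.iterate k hy
    have hCsub : closure (fwdOrbit T y) ⊆ K₀ := closure_minimal horb hK₀cl
    have hCS : closure (fwdOrbit T y) ∈ S :=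
      ⟨⟨y, subset_closure ⟨0, rfl⟩⟩, isClosed_closure, closure_fwdOrbit_mapsTo' hT y,
        hCsub.trans hK₀sub⟩
    exact le_antisymm hCsub (hK₀min hCS hCsub)
  obtain ⟨y, hy⟩ := hK₀ne
  refine ⟨y, hK₀sub hy, fun z hz => ?_⟩
  rw [key y hy] at hz
  rw [key y hy, key z hz]

theorem stmt15 [MetricSpace X] [CompactSpace X] (T : X → X) (hT : Continuous T) :
    ∀ ε > (0 : ℝ), ∃ δ > (0 : ℝ), ∀ x : ℕ → X, IsPseudoTraj T δ x →
      Syndetic {k : ℕ | x k ∈ Metric.thickening ε (closure {y : X | IsMinimalPt T y})} := by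
  intro ε hε
  by_contra h
  push_neg at h
  set M : Set X := closure {y : X | IsMinimalPt T y} with hM
  have hsel : ∀ n : ℕ, ∃ y : ℕ → X, IsPseudoTraj T (1 / (n + 1 : ℝ)) y ∧
      ∀ j ≤ n, y j ∉ Metric.thickening ε M := by
    intro n
    obtain ⟨x, hx, hns⟩ := h (1 / (n + 1 : ℝ)) (by positivity)
    rw [Syndetic] at hns
    push_neg at hns
    obtain ⟨m, hm⟩ := hns n
    refine ⟨fun j => x (m + j), fun k => ?_, fun j hj hmem => ?_⟩
    · have := hx (m + k)
      have he : m + (k + 1) = m + k + 1 := by omega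
      show dist (x (m + (k + 1))) (T (x (m + k))) ≤ _
      rw [he]
      exact this
    · have := hm (m + j) hmem (by omega)
      omega
  choose y hy hyavoid using hsel
  haveI : Nonempty X := ⟨y 0 0⟩
  set U : Ultrafilter ℕ := Ultrafilter.of atTop with hUdef
  have hU : (U : Filter ℕ) ≤ atTop := Ultrafilter.of_le atTop
  set z : ℕ → X := fun j => (U.map (fun n => y n j)).lim with hzdef
  have hz : ∀ j, Filter.Tendsto (fun n => y n j) U (nhds (z j)) := by
    intro j
    have := (U.map (fun n => y n j)).le_nhds_lim
    rwa [Ultrafilter.coe_map] at this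
  have hstep : ∀ j, z (j + 1) = T (z j) := by
    intro j
    have h1 : Filter.Tendsto (fun n => y n (j + 1)) U (nhds (z (j + 1))) := hz _
    have h2 : Filter.Tendsto (fun n => T (y n j)) U (nhds (T (z j))) :=
      (hT.tendsto _).comp (hz j)
    have h3 : Filter.Tendsto (fun n => dist (y n (j + 1)) (T (y n j))) U
        (nhds (dist (z (j + 1)) (T (z j)))) := h1.dist h2
    have h4 : Filter.Tendsto (fun n : ℕ => dist (y n (j + 1)) (T (y n j))) U (nhds 0) := by
      apply squeeze_zero (fun n => dist_nonneg) (fun n => hy n j)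
      exact tendsto_one_div_add_atTop_nhds_zero_nat.mono_left hU
    exact eq_of_dist_eq_zero (tendsto_nhds_unique h3 h4)
  have havoid : ∀ j, z j ∈ (Metric.thickening ε M)ᶜ := by
    intro j
    have hev : ∀ᶠ n in (U : Filter ℕ), y n j ∈ (Metric.thickening ε M)ᶜ :=
      ((eventually_ge_atTop j).filter_mono hU).mono fun n hn => hyavoid n j hn
    exact Metric.isOpen_thickening.isClosed_compl.mem_of_tendsto (hz j) hev
  have horbit : ∀ j, z j = T^[j] (z 0) := by
    intro j
    induction j with
    | zero => rfl
    | succ k ih => rw [Function.iterate_succ_apply', ← ih, hstep]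
  obtain ⟨m, hmK, hmmin⟩ := exists_minimalPt' (K := closure (fwdOrbit T (z 0))) hT ⟨z 0, subset_closure ⟨0, rfl⟩⟩
    isClosed_closure (closure_fwdOrbit_mapsTo' hT (z 0))
  have hKavoid : closure (fwdOrbit T (z 0)) ⊆ (Metric.thickening ε M)ᶜ := by
    apply closure_minimal _ Metric.isOpen_thickening.isClosed_compl
    rintro _ ⟨k, rfl⟩
    show T^[k] (z 0) ∈ _
    rw [← horbit k]
    exact havoid k
  exact hKavoid hmK (Metric.self_subset_thickening hε M (subset_closure hmmin))
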